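/- Let n > 10 and U > 32, let L be an n×n invertible SDDM matrix with integer entries in [-U, U], and set ℓ := ⌈√(log₂ n)⌉ + 3, r_in := 2^{2ℓ+1}, r_out := 2^{ℓ−2}, and α := 6ℓ² · 16^ℓ · ⌈log₂(2n)⌉. Then there exists an (r_in, r_out, α)-cover for L: a finite collection of pairs {(V₁, W₁), …, (V_k, W_k)} of subsets of [n] such that (1) V_i ⊆ W_i ⊆ [n] for all i ∈ [k]; (2) every u ∈ [n] lies in V_i for at least one i ∈ [k]; (3) every u ∈ [n] lies in W_i for at most α indices i ∈ [k]; (4) for every i ∈ [k] and every pair u, v ∈ W_i, the probability distance satisfies D_L(u, v) ≤ r_in; and (5) for every i ∈ [k], every u ∈ V_i, and every v ∈ [n] \ W_i, D_L(u, v) > r_out. -/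

import Mathlib

open Finset Matrix

namespace LDC

variable {ι : Type*} [Fintype ι] [DecidableEq ι]

/-- surplus of row i -/
noncomputable def srp (M : Matrix ι ι ℝ) (i : ι) : ℝ :=
  M i i - ∑ j ∈ Finset.univ.erase i, |M i j|

/-- no nonempty "closed, zero-surplus" set -/
def NC (M : Matrix ι ι ℝ) : Prop :=
  ∀ T : Finset ι, T.Nonempty → (∀ i ∈ T, ∀ j, j ∉ T → M i j = 0) →
    (∀ i ∈ T, srp M i = 0) → False

lemma not_isUnit_of_closed (M : Matrix ι ι ℝ) (hsym : Mᵀ = M)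
    (hoff : ∀ i j, i ≠ j → M i j ≤ 0)
    (T : Finset ι) (hT : T.Nonempty)
    (hcl : ∀ i ∈ T, ∀ j, j ∉ T → M i j = 0)
    (hz : ∀ i ∈ T, srp M i = 0) : ¬ IsUnit M := by
  intro hM
  set y : ι → ℝ := fun i => if i ∈ T then 1 else 0 with hy
  have hMy : M.mulVec y = 0 := by
    funext i
    have h1 : M.mulVec y i = ∑ j ∈ T, M i j := by
      simp only [mulVec, dotProduct, hy, mul_ite, mul_one, mul_zero]
      rw [Finset.sum_ite_mem, Finset.univ_inter]
    by_cases hi : i ∈ T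
    · have h2 : ∑ j ∈ T, M i j = ∑ j ∈ Finset.univ, M i j :=
        Finset.sum_subset (Finset.subset_univ T) (fun j _ hj => hcl i hi j hj)
      have h3 : ∑ j ∈ Finset.univ, M i j = M i i + ∑ j ∈ Finset.univ.erase i, M i j :=
        (Finset.add_sum_erase _ _ (Finset.mem_univ i)).symm
      have h4 : ∑ j ∈ Finset.univ.erase i, M i j
          = -∑ j ∈ Finset.univ.erase i, |M i j| := by
        rw [← Finset.sum_neg_distrib]
        apply Finset.sum_congr rfl
        intro j hj
        have hji : j ≠ i := Finset.ne_of_mem_erase hj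
        rw [abs_of_nonpos (hoff i j hji.symm)]; ring
      have := hz i hi
      simp only [srp] at this
      simp only [Pi.zero_apply, h1, h2, h3, h4]
      linarith
    · simp only [Pi.zero_apply, h1]
      apply Finset.sum_eq_zero
      intro j hj
      have : M j i = 0 := hcl j hj i hi
      have hsym' : M i j = M j i := by
        conv_lhs => rw [← hsym, Matrix.transpose_apply]
      rw [hsym', this]
  have hy0 : y ≠ 0 := by
    obtain ⟨t, ht⟩ := hT
    intro h
    have := congrFun h t
    simp [hy, ht] at this
  have hdet : IsUnit M.det := (Matrix.isUnit_iff_isUnit_det M).mp hM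
  have hzero : M.det = 0 := Matrix.exists_mulVec_eq_zero_iff.mp ⟨y, hy0, hMy⟩
  rw [hzero] at hdet
  exact (by simp at hdet)

lemma nc_of_isUnit (M : Matrix ι ι ℝ) (hsym : Mᵀ = M)
    (hoff : ∀ i j, i ≠ j → M i j ≤ 0) (hM : IsUnit M) : NC M := by
  intro T hT hcl hz
  exact not_isUnit_of_closed M hsym hoff T hT hcl hz hM

lemma kernel_trivial (M : Matrix ι ι ℝ)
    (hdd : ∀ i, 0 ≤ srp M i) (hnc : NC M)
    (y : ι → ℝ) (hy0 : y ≠ 0) (hMy : M.mulVec y = 0) : False := by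
  obtain ⟨i₀, hi₀⟩ : ∃ i, y i ≠ 0 := Function.ne_iff.mp hy0
  obtain ⟨im, -, hmax⟩ := Finset.exists_max_image Finset.univ (fun i => |y i|)
    ⟨i₀, Finset.mem_univ i₀⟩
  set m := |y im| with hm
  have hm0 : 0 < m := lt_of_lt_of_le (abs_pos.mpr hi₀) (hmax i₀ (Finset.mem_univ i₀))
  set T : Finset ι := Finset.univ.filter (fun i => |y i| = m) with hT
  have hTmem : ∀ i, i ∈ T ↔ |y i| = m := by
    intro i; simp [hT]
  have key : ∀ i ∈ T, (∀ j, j ∉ T → M i j = 0) ∧ srp M i = 0 := by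
    intro i hiT
    have hMii : 0 ≤ M i i := by
      have := hdd i
      have h2 : 0 ≤ ∑ j ∈ Finset.univ.erase i, |M i j| :=
        Finset.sum_nonneg fun j _ => abs_nonneg _
      simp only [srp] at this
      linarith
    have hyi : |y i| = m := (hTmem i).mp hiT
    have heq : M i i * y i + ∑ j ∈ Finset.univ.erase i, M i j * y j = 0 := by
      have := congrFun hMy i
      simp only [mulVec, dotProduct, Pi.zero_apply] at this
      rw [← this, Finset.add_sum_erase _ (fun j => M i j * y j) (Finset.mem_univ i)]
    have h1 : M i i * m = |∑ j ∈ Finset.univ.erase i, M i j * y j| := by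
      have : M i i * y i = -∑ j ∈ Finset.univ.erase i, M i j * y j := by linarith
      calc M i i * m = |M i i * y i| := by rw [abs_mul, abs_of_nonneg hMii, hyi]
        _ = |∑ j ∈ Finset.univ.erase i, M i j * y j| := by rw [this, abs_neg]
    have h2 : |∑ j ∈ Finset.univ.erase i, M i j * y j|
        ≤ ∑ j ∈ Finset.univ.erase i, |M i j| * |y j| := by
      refine le_trans (Finset.abs_sum_le_sum_abs _ _) ?_
      apply le_of_eq
      exact Finset.sum_congr rfl fun j _ => abs_mul _ _
    have h3 : ∑ j ∈ Finset.univ.erase i, |M i j| * |y j|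
        ≤ ∑ j ∈ Finset.univ.erase i, |M i j| * m := by
      apply Finset.sum_le_sum
      intro j _
      exact mul_le_mul_of_nonneg_left (hmax j (Finset.mem_univ j)) (abs_nonneg _)
    have h4 : ∑ j ∈ Finset.univ.erase i, |M i j| * m ≤ M i i * m := by
      rw [← Finset.sum_mul]
      apply mul_le_mul_of_nonneg_right _ hm0.le
      have := hdd i; simp only [srp] at this; linarith
    have e34 : ∑ j ∈ Finset.univ.erase i, |M i j| * |y j|
        = ∑ j ∈ Finset.univ.erase i, |M i j| * m := le_antisymm h3 (by linarith)
    have e4 : ∑ j ∈ Finset.univ.erase i, |M i j| * m = M i i * m := le_antisymm h4 (by linarith)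
    constructor
    · intro j hjT
      by_cases hji : j = i
      · subst hji
        exfalso; exact hjT hiT
      · have hdiff : ∑ j ∈ Finset.univ.erase i, |M i j| * (m - |y j|) = 0 := by
          simp only [mul_sub]
          rw [Finset.sum_sub_distrib, e34]; ring
        have hterm := (Finset.sum_eq_zero_iff_of_nonneg ?_).mp hdiff j
          (Finset.mem_erase.mpr ⟨hji, Finset.mem_univ j⟩)
        · by_contra hMij
          have : m - |y j| = 0 := by
            rcases mul_eq_zero.mp hterm with h | h
            · exact absurd (abs_eq_zero.mp h) hMij
            · exact h
          have : |y j| = m := by linarith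
          exact hjT ((hTmem j).mpr this)
        · intro j hj
          apply mul_nonneg (abs_nonneg _)
          have := hmax j (Finset.mem_univ j); linarith
    · have : srp M i * m = 0 := by
        simp only [srp, sub_mul]
        rw [Finset.sum_mul]
        linarith [e4]
      rcases mul_eq_zero.mp this with h | h
      · exact h
      · exact absurd h hm0.ne'
  refine hnc T ⟨im, (hTmem im).mpr rfl⟩ (fun i hi => (key i hi).1) (fun i hi => (key i hi).2)

lemma isUnit_of_nc (M : Matrix ι ι ℝ)
    (hdd : ∀ i, 0 ≤ srp M i) (hnc : NC M) : IsUnit M := by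
  rw [Matrix.isUnit_iff_isUnit_det, isUnit_iff_ne_zero]
  intro hdet
  obtain ⟨y, hy0, hMy⟩ := Matrix.exists_mulVec_eq_zero_iff.mpr hdet
  exact kernel_trivial M hdd hnc y hy0 hMy

end LDC

namespace LDC2
open LDC

variable {ι : Type*} [Fintype ι] [DecidableEq ι]

lemma inv_entry_nonneg (M : Matrix ι ι ℝ) (hsym : Mᵀ = M)
    (hoff : ∀ i j, i ≠ j → M i j ≤ 0)
    (hdd : ∀ i, 0 ≤ srp M i) (hM : IsUnit M) :
    ∀ a b, 0 ≤ M⁻¹ a b := by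
  have hnc : NC M := nc_of_isUnit M hsym hoff hM
  have hdet : IsUnit M.det := (Matrix.isUnit_iff_isUnit_det M).mp hM
  have hMinv : M * M⁻¹ = 1 := Matrix.mul_nonsing_inv M hdet
  intro a b
  by_contra hneg
  push_neg at hneg
  set c : ι → ℝ := fun i => M⁻¹ i b with hc
  have hcol : ∀ i, M i i * c i + ∑ j ∈ Finset.univ.erase i, M i j * c j
      = if i = b then 1 else 0 := by
    intro i
    rw [Finset.add_sum_erase _ (fun j => M i j * c j) (Finset.mem_univ i)]
    have hMA : ∑ j ∈ Finset.univ, M i j * c j = (M * M⁻¹) i b := by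
      simp only [hc]; rw [Matrix.mul_apply]
    rw [hMA, hMinv, Matrix.one_apply]
  obtain ⟨im, -, hmin⟩ := Finset.exists_min_image Finset.univ c ⟨a, Finset.mem_univ a⟩
  set m := c im with hm
  have hm0 : m < 0 := lt_of_le_of_lt (hmin a (Finset.mem_univ a)) hneg
  set T : Finset ι := Finset.univ.filter (fun i => c i = m) with hT
  have hTmem : ∀ i, i ∈ T ↔ c i = m := by intro i; simp [hT]
  have key : ∀ i ∈ T, (∀ j, j ∉ T → M i j = 0) ∧ srp M i = 0 := by
    intro i hiT
    have hci : c i = m := (hTmem i).mp hiT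
    have hub : ∀ j ∈ Finset.univ.erase i, M i j * c j ≤ M i j * m := by
      intro j hj
      have hji : j ≠ i := Finset.ne_of_mem_erase hj
      exact mul_le_mul_of_nonpos_left (hmin j (Finset.mem_univ j)) (hoff i j hji.symm)
    have hsum : ∑ j ∈ Finset.univ.erase i, M i j * c j
        ≤ ∑ j ∈ Finset.univ.erase i, M i j * m := Finset.sum_le_sum hub
    have hofs : ∑ j ∈ Finset.univ.erase i, M i j = srp M i - M i i := by
      have habs : ∀ j ∈ Finset.univ.erase i, M i j = -|M i j| := by
        intro j hj
        have hji : j ≠ i := Finset.ne_of_mem_erase hj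
        rw [abs_of_nonpos (hoff i j hji.symm)]; ring
      rw [Finset.sum_congr rfl habs, Finset.sum_neg_distrib]
      simp [srp]
    have h5 : ∑ j ∈ Finset.univ.erase i, M i j * m = (srp M i - M i i) * m := by
      rw [← Finset.sum_mul, hofs]
    have hup : (if i = b then (1:ℝ) else 0) ≤ srp M i * m := by
      rw [← hcol i, hci]
      have h6 : M i i * m + (srp M i - M i i) * m = srp M i * m := by ring
      linarith [hsum, h5]
    have hlow : (0:ℝ) ≤ if i = b then (1:ℝ) else 0 := by split <;> norm_num
    have hsrpm : srp M i * m ≤ 0 := mul_nonpos_of_nonneg_of_nonpos (hdd i) hm0.le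
    have hite0 : (if i = b then (1:ℝ) else 0) = 0 :=
      le_antisymm (le_trans hup hsrpm) hlow
    have hsrpz : srp M i = 0 := by
      have hz : srp M i * m = 0 := le_antisymm hsrpm (by rw [hite0] at hup; linarith)
      rcases mul_eq_zero.mp hz with h | h
      · exact h
      · exact absurd h hm0.ne
    refine ⟨?_, hsrpz⟩
    intro j hjT
    have hji : j ≠ i := by rintro rfl; exact hjT hiT
    -- equality in hsum
    have hveq : M i i * m + ∑ j ∈ Finset.univ.erase i, M i j * c j = 0 := by
      have h7 := hcol i
      rw [hci] at h7
      rw [h7, hite0]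
    have heq2 : ∑ j ∈ Finset.univ.erase i, (M i j * m - M i j * c j) = 0 := by
      rw [Finset.sum_sub_distrib, h5, hsrpz]
      linarith [hveq]
    have hterm := (Finset.sum_eq_zero_iff_of_nonneg
      (fun j hj => by linarith [hub j hj])).mp heq2 j
      (Finset.mem_erase.mpr ⟨hji, Finset.mem_univ j⟩)
    have hfac : M i j * (m - c j) = 0 := by linarith [hterm]
    rcases mul_eq_zero.mp hfac with h | h
    · exact h
    · exfalso
      have : c j = m := by linarith
      exact hjT ((hTmem j).mpr this)
  exact hnc T ⟨im, (hTmem im).mpr rfl⟩ (fun i hi => (key i hi).1) (fun i hi => (key i hi).2)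

lemma one_le_diag_mul_inv (M : Matrix ι ι ℝ)
    (hoff : ∀ i j, i ≠ j → M i j ≤ 0) (hM : IsUnit M)
    (hpos : ∀ a b, 0 ≤ M⁻¹ a b) (b : ι) : 1 ≤ M b b * M⁻¹ b b := by
  have hdet : IsUnit M.det := (Matrix.isUnit_iff_isUnit_det M).mp hM
  have hMinv : M * M⁻¹ = 1 := Matrix.mul_nonsing_inv M hdet
  have h1 : ∑ j ∈ Finset.univ, M b j * M⁻¹ j b = 1 := by
    rw [show (∑ j ∈ Finset.univ, M b j * M⁻¹ j b) = (M * M⁻¹) b b by rw [Matrix.mul_apply],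
      hMinv, Matrix.one_apply]
    simp
  have h2 : ∑ j ∈ Finset.univ.erase b, M b j * M⁻¹ j b ≤ 0 := by
    apply Finset.sum_nonpos
    intro j hj
    exact mul_nonpos_of_nonpos_of_nonneg
      (hoff b j (Finset.ne_of_mem_erase hj).symm) (hpos j b)
  have h3 : M b b * M⁻¹ b b + ∑ j ∈ Finset.univ.erase b, M b j * M⁻¹ j b
      = ∑ j ∈ Finset.univ, M b j * M⁻¹ j b :=
    Finset.add_sum_erase Finset.univ (fun j => M b j * M⁻¹ j b) (Finset.mem_univ b)
  linarith [h1, h2, h3]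

lemma inv_le_card (M : Matrix ι ι ℝ) (hsym : Mᵀ = M)
    (hoff : ∀ i j, i ≠ j → M i j ≤ 0)
    (hdd : ∀ i, 0 ≤ srp M i)
    (hint : ∀ i j, ∃ z : ℤ, M i j = (z : ℝ))
    (hM : IsUnit M) :
    ∀ a b, M⁻¹ a b ≤ (Fintype.card ι : ℝ) := by
  have hnc : NC M := nc_of_isUnit M hsym hoff hM
  have hdet : IsUnit M.det := (Matrix.isUnit_iff_isUnit_det M).mp hM
  have hMinv : M * M⁻¹ = 1 := Matrix.mul_nonsing_inv M hdet
  have hpos := inv_entry_nonneg M hsym hoff hdd hM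
  have hsymE : ∀ i j, M i j = M j i := by
    intro i j; conv_lhs => rw [← hsym, Matrix.transpose_apply]
  choose zf hzf using hint
  have hsrpint : ∀ i, ∃ z : ℤ, srp M i = (z : ℝ) := by
    intro i
    refine ⟨zf i i - ∑ j ∈ Finset.univ.erase i, |zf i j|, ?_⟩
    simp only [srp]
    push_cast
    rw [hzf i i]
    congr 1
    refine Finset.sum_congr rfl fun j _ => ?_
    rw [hzf i j]
  have hsrp1 : ∀ i, srp M i ≠ 0 → 1 ≤ srp M i := by
    intro i hne
    obtain ⟨z, hz⟩ := hsrpint i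
    have h0 : (0:ℝ) ≤ (z:ℝ) := hz ▸ hdd i
    have h1 : (z:ℝ) ≠ 0 := hz ▸ hne
    have : (1:ℤ) ≤ z := by
      have : (0:ℤ) < z := by exact_mod_cast lt_of_le_of_ne h0 (Ne.symm h1)
      omega
    rw [hz]; exact_mod_cast this
  have hw1 : ∀ i j, i ≠ j → M i j ≠ 0 → 1 ≤ -(M i j) := by
    intro i j hij hne
    have hle := hoff i j hij
    rw [hzf i j] at hle hne ⊢
    have : zf i j ≤ -1 := by
      have h0 : zf i j ≤ 0 := by exact_mod_cast hle
      have h1 : zf i j ≠ 0 := by exact_mod_cast hne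
      omega
    have : (zf i j : ℝ) ≤ -1 := by exact_mod_cast this
    linarith
  intro a b
  set x : ι → ℝ := fun i => M⁻¹ i b with hx
  have hxnn : ∀ i, 0 ≤ x i := fun i => hpos i b
  have hcol : ∀ i, ∑ j ∈ Finset.univ, M i j * x j = if i = b then 1 else 0 := by
    intro i
    have hMA : ∑ j ∈ Finset.univ, M i j * x j = (M * M⁻¹) i b := by
      simp only [hx]; rw [Matrix.mul_apply]
    rw [hMA, hMinv, Matrix.one_apply]
  set S : Finset ℝ := Finset.univ.image x with hS
  have descent : ∀ t ∈ S, 1 < t → ∃ t' ∈ S, t' < t ∧ t ≤ t' + 1 := by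
    intro t htS ht1
    obtain ⟨iw, -, hiw⟩ := Finset.mem_image.mp htS
    set A : Finset ι := Finset.univ.filter (fun i => t ≤ x i) with hA
    have hAmem : ∀ i, i ∈ A ↔ t ≤ x i := by intro i; simp [hA]
    have hAne : A.Nonempty := ⟨iw, (hAmem iw).mpr (le_of_eq hiw.symm)⟩
    have hrow : ∀ i, ∑ j ∈ Finset.univ, M i j * x j
        = srp M i * x i + ∑ j ∈ Finset.univ.erase i, (-(M i j)) * (x i - x j) := by
      intro i
      have h1 : ∑ j ∈ Finset.univ, M i j * x j
          = M i i * x i + ∑ j ∈ Finset.univ.erase i, M i j * x j :=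
        (Finset.add_sum_erase _ _ (Finset.mem_univ i)).symm
      have h2 : ∑ j ∈ Finset.univ.erase i, (-(M i j)) * (x i - x j)
          = (∑ j ∈ Finset.univ.erase i, (-(M i j))) * x i
            + ∑ j ∈ Finset.univ.erase i, M i j * x j := by
        rw [Finset.sum_mul, ← Finset.sum_add_distrib]
        refine Finset.sum_congr rfl fun j _ => by ring
      have h3 : ∑ j ∈ Finset.univ.erase i, (-(M i j))
          = ∑ j ∈ Finset.univ.erase i, |M i j| := by
        refine Finset.sum_congr rfl fun j hj => ?_
        rw [abs_of_nonpos (hoff i j (Finset.ne_of_mem_erase hj).symm)]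
      rw [h1, h2, h3]
      simp only [srp]; ring
    have hK1 : ∑ i ∈ A, ∑ j ∈ Finset.univ, M i j * x j ≤ 1 := by
      calc ∑ i ∈ A, ∑ j ∈ Finset.univ, M i j * x j
          = ∑ i ∈ A, (if i = b then (1:ℝ) else 0) :=
            Finset.sum_congr rfl fun i _ => hcol i
        _ ≤ ∑ i ∈ Finset.univ, (if i = b then (1:ℝ) else 0) :=
            Finset.sum_le_sum_of_subset_of_nonneg (Finset.subset_univ A)
              (fun i _ _ => by split <;> norm_num)
        _ = 1 := by simp
    have hsplit : ∀ i ∈ A, ∑ j ∈ Finset.univ.erase i, (-(M i j)) * (x i - x j)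
        = ∑ j ∈ A.erase i, (-(M i j)) * (x i - x j)
          + ∑ j ∈ Finset.univ \ A, (-(M i j)) * (x i - x j) := by
      intro i hi
      have hun : Finset.univ.erase i = (A.erase i) ∪ (Finset.univ \ A) := by
        ext j
        simp only [Finset.mem_erase, Finset.mem_union, Finset.mem_sdiff,
          Finset.mem_univ, true_and, and_true]
        constructor
        · intro hji
          by_cases hjA : j ∈ A
          · exact Or.inl ⟨hji, hjA⟩
          · exact Or.inr hjA
        · rintro (⟨hji, -⟩ | hjA)
          · exact hji
          · rintro rfl; exact hjA hi
      have hdisj : Disjoint (A.erase i) (Finset.univ \ A) := by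
        rw [Finset.disjoint_left]
        intro j hj hj2
        exact (Finset.mem_sdiff.mp hj2).2 (Finset.mem_of_mem_erase hj)
      rw [hun, Finset.sum_union hdisj]
    have hZ : ∑ i ∈ A, ∑ j ∈ A.erase i, (-(M i j)) * (x i - x j) = 0 := by
      have hdiag0 : ∀ i ∈ A, ∑ j ∈ A.erase i, (-(M i j)) * (x i - x j)
          = ∑ j ∈ A, (-(M i j)) * (x i - x j) := by
        intro i _
        apply Finset.sum_erase
        simp
      rw [Finset.sum_congr rfl hdiag0]
      have hneg : (∑ i ∈ A, ∑ j ∈ A, (-(M i j)) * (x i - x j))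
          = -∑ i ∈ A, ∑ j ∈ A, (-(M i j)) * (x i - x j) := by
        conv_lhs => rw [Finset.sum_comm]
        rw [← Finset.sum_neg_distrib]
        refine Finset.sum_congr rfl fun j _ => ?_
        rw [← Finset.sum_neg_distrib]
        refine Finset.sum_congr rfl fun i _ => ?_
        rw [hsymE j i]; ring
      linarith [hneg]
    have hKeq : ∑ i ∈ A, ∑ j ∈ Finset.univ, M i j * x j
        = (∑ i ∈ A, srp M i * x i)
          + ∑ i ∈ A, ∑ j ∈ Finset.univ \ A, (-(M i j)) * (x i - x j) := by
      rw [Finset.sum_congr rfl (fun i _ => hrow i), Finset.sum_add_distrib]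
      congr 1
      rw [Finset.sum_congr rfl hsplit, Finset.sum_add_distrib, hZ, zero_add]
    have hPnn : ∀ i ∈ A, (0:ℝ) ≤ srp M i * x i :=
      fun i _ => mul_nonneg (hdd i) (hxnn i)
    have hCnn : ∀ i ∈ A, ∀ j ∈ Finset.univ \ A, (0:ℝ) ≤ (-(M i j)) * (x i - x j) := by
      intro i hi j hj
      obtain ⟨-, hjA⟩ := Finset.mem_sdiff.mp hj
      have hij : i ≠ j := by rintro rfl; exact hjA hi
      have h5 : x j < t := lt_of_not_ge (fun h => hjA ((hAmem j).mpr h))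
      have h6 : t ≤ x i := (hAmem i).mp hi
      exact mul_nonneg (by linarith [hoff i j hij]) (by linarith)
    have hPnn' : (0:ℝ) ≤ ∑ i ∈ A, srp M i * x i := Finset.sum_nonneg hPnn
    have hCnn' : (0:ℝ) ≤ ∑ i ∈ A, ∑ j ∈ Finset.univ \ A, (-(M i j)) * (x i - x j) :=
      Finset.sum_nonneg fun i hi => Finset.sum_nonneg fun j hj => hCnn i hi j hj
    rw [hKeq] at hK1
    by_cases hcross : ∃ i ∈ A, ∃ j ∈ Finset.univ \ A, M i j ≠ 0
    · obtain ⟨i, hi, j, hj, hMij⟩ := hcross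
      obtain ⟨-, hjA⟩ := Finset.mem_sdiff.mp hj
      have hij : i ≠ j := by rintro rfl; exact hjA hi
      have hwge : 1 ≤ -(M i j) := hw1 i j hij hMij
      have hxj : x j < t := lt_of_not_ge (fun h => hjA ((hAmem j).mpr h))
      have hxi : t ≤ x i := (hAmem i).mp hi
      have hterm : (-(M i j)) * (x i - x j) ≤ 1 := by
        have h7 : (-(M i j)) * (x i - x j)
            ≤ ∑ j' ∈ Finset.univ \ A, (-(M i j')) * (x i - x j') :=
          Finset.single_le_sum (fun j' hj' => hCnn i hi j' hj') hj
        have h8 : ∑ j' ∈ Finset.univ \ A, (-(M i j')) * (x i - x j')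
            ≤ ∑ i' ∈ A, ∑ j' ∈ Finset.univ \ A, (-(M i' j')) * (x i' - x j') :=
          Finset.single_le_sum
            (fun i' hi' => Finset.sum_nonneg (fun j' hj' => hCnn i' hi' j' hj')) hi
        linarith
      have hgap : x i - x j ≤ 1 := by nlinarith [hterm, hwge]
      exact ⟨x j, Finset.mem_image.mpr ⟨j, Finset.mem_univ j, rfl⟩, hxj, by linarith⟩
    · push_neg at hcross
      by_cases hs : ∃ i ∈ A, srp M i ≠ 0
      · obtain ⟨i, hi, hsi⟩ := hs
        have h1le : 1 ≤ srp M i := hsrp1 i hsi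
        have hxi : t ≤ x i := (hAmem i).mp hi
        have hsx : srp M i * x i ≤ 1 := by
          have h7 := Finset.single_le_sum hPnn hi
          linarith
        exfalso
        nlinarith [hxnn i]
      · push_neg at hs
        exfalso
        apply hnc A hAne
        · intro i hi j hjA
          exact hcross i hi j (Finset.mem_sdiff.mpr ⟨Finset.mem_univ j, hjA⟩)
        · exact hs
  have bound : ∀ k : ℕ, ∀ t, t ∈ S → (S.filter (fun s => s < t)).card ≤ k
      → t ≤ (k:ℝ) + 1 := by
    intro k
    induction k with
    | zero =>
      intro t htS hcard
      by_contra hgt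
      push_neg at hgt
      have h1t : 1 < t := by push_cast at hgt; linarith
      obtain ⟨t', ht'S, ht'lt, -⟩ := descent t htS h1t
      have hmem : t' ∈ S.filter (fun s => s < t) :=
        Finset.mem_filter.mpr ⟨ht'S, ht'lt⟩
      have := Finset.card_pos.mpr ⟨t', hmem⟩
      omega
    | succ k ih =>
      intro t htS hcard
      by_cases h1t : 1 < t
      · obtain ⟨t', ht'S, ht'lt, hstep⟩ := descent t htS h1t
        have ht'mem : t' ∈ S.filter (fun s => s < t) :=
          Finset.mem_filter.mpr ⟨ht'S, ht'lt⟩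
        have hsub : S.filter (fun s => s < t') ⊆ (S.filter (fun s => s < t)).erase t' := by
          intro s hs
          obtain ⟨hsS, hst'⟩ := Finset.mem_filter.mp hs
          exact Finset.mem_erase.mpr ⟨ne_of_lt hst',
            Finset.mem_filter.mpr ⟨hsS, lt_trans hst' ht'lt⟩⟩
        have hc2 : (S.filter (fun s => s < t')).card ≤ k := by
          have h9 := Finset.card_le_card hsub
          rw [Finset.card_erase_of_mem ht'mem] at h9
          omega
        have := ih t' ht'S hc2
        push_cast
        linarith
      · push_neg at h1t
        push_cast
        linarith
  have hxS : x a ∈ S := Finset.mem_image.mpr ⟨a, Finset.mem_univ a, rfl⟩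
  have hcpos : 0 < Fintype.card ι := Fintype.card_pos_iff.mpr ⟨a⟩
  have hcard : (S.filter (fun s => s < x a)).card ≤ Fintype.card ι - 1 := by
    have h1 : S.filter (fun s => s < x a) ⊆ S.erase (x a) := by
      intro s hs
      obtain ⟨h, h2⟩ := Finset.mem_filter.mp hs
      exact Finset.mem_erase.mpr ⟨ne_of_lt h2, h⟩
    have h2 := Finset.card_le_card h1
    rw [Finset.card_erase_of_mem hxS] at h2
    have h3 : S.card ≤ Fintype.card ι :=
      le_trans Finset.card_image_le (by simp)
    omega
  have hfin := bound (Fintype.card ι - 1) (x a) hxS hcard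
  have hcast : ((Fintype.card ι - 1 : ℕ) : ℝ) + 1 = (Fintype.card ι : ℝ) := by
    rw [Nat.cast_sub hcpos]
    push_cast; ring
  rw [hcast] at hfin
  exact hfin

lemma inv_diag_pos (M : Matrix ι ι ℝ) (hsym : Mᵀ = M)
    (hoff : ∀ i j, i ≠ j → M i j ≤ 0)
    (hdd : ∀ i, 0 ≤ srp M i)
    (hdiagpos : ∀ i, 0 < M i i)
    (hM : IsUnit M) : ∀ i, 0 < M⁻¹ i i := by
  intro i
  have hpos := inv_entry_nonneg M hsym hoff hdd hM
  have h1 := one_le_diag_mul_inv M hoff hM hpos i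
  by_contra hle
  push_neg at hle
  nlinarith [hdiagpos i]

lemma path_prod (M : Matrix ι ι ℝ) (hsym : Mᵀ = M)
    (hoff : ∀ i j, i ≠ j → M i j ≤ 0)
    (hdd : ∀ i, 0 ≤ srp M i)
    (hdiagpos : ∀ i, 0 < M i i)
    (hM : IsUnit M) :
    ∀ a w b, M⁻¹ a w * M⁻¹ w b ≤ M⁻¹ a b * M⁻¹ w w := by
  have hnc : NC M := nc_of_isUnit M hsym hoff hM
  have hdet : IsUnit M.det := (Matrix.isUnit_iff_isUnit_det M).mp hM
  have hMinv : M * M⁻¹ = 1 := Matrix.mul_nonsing_inv M hdet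
  have hsymE : ∀ i j, M i j = M j i := by
    intro i j; conv_lhs => rw [← hsym, Matrix.transpose_apply]
  intro a w b
  by_cases haw : a = w
  · subst haw; exact le_of_eq (mul_comm _ _)
  by_cases hbw : b = w
  · subst hbw; exact le_refl _
  · have hww : 0 < M⁻¹ w w := inv_diag_pos M hsym hoff hdd hdiagpos hM w
    set N : Matrix {j // j ≠ w} {j // j ≠ w} ℝ :=
      M.submatrix (fun p => (p : ι)) (fun p => (p : ι)) with hN
    have hNapp : ∀ p q : {j // j ≠ w}, N p q = M (p:ι) (q:ι) := fun p q => rfl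
    have hNsym : Nᵀ = N := by
      ext p q
      rw [Matrix.transpose_apply, hNapp, hNapp, hsymE]
    have hNoff : ∀ p q : {j // j ≠ w}, p ≠ q → N p q ≤ 0 := by
      intro p q hpq
      exact hoff _ _ (fun h => hpq (Subtype.ext h))
    -- splitting the absolute row sums
    have hsum_split : ∀ p : {j // j ≠ w},
        ∑ j ∈ Finset.univ.erase (p:ι), |M (p:ι) j|
          = (∑ q ∈ Finset.univ.erase p, |M (p:ι) (q:ι)|) + |M (p:ι) w| := by
      intro p
      have himg : (Finset.univ.erase (p:ι))
          = ((Finset.univ.erase p).image (Subtype.val : {j // j ≠ w} → ι)) ∪ {w} := by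
        ext j
        constructor
        · intro hj
          have hjp : j ≠ (p:ι) := Finset.ne_of_mem_erase hj
          by_cases hjw : j = w
          · exact Finset.mem_union_right _ (by simp [hjw])
          · refine Finset.mem_union_left _ ?_
            refine Finset.mem_image.mpr ⟨⟨j, hjw⟩, ?_, rfl⟩
            refine Finset.mem_erase.mpr ⟨?_, Finset.mem_univ _⟩
            intro h
            exact hjp (congrArg Subtype.val h)
        · intro hj
          rcases Finset.mem_union.mp hj with h | h
          · obtain ⟨q, hq, rfl⟩ := Finset.mem_image.mp h
            refine Finset.mem_erase.mpr ⟨?_, Finset.mem_univ _⟩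
            intro h2
            exact (Finset.ne_of_mem_erase hq) (Subtype.ext h2)
          · simp only [Finset.mem_singleton] at h
            subst h
            exact Finset.mem_erase.mpr ⟨Ne.symm p.prop, Finset.mem_univ _⟩
      have hdisj : Disjoint ((Finset.univ.erase p).image (Subtype.val : {j // j ≠ w} → ι)) {w} := by
        rw [Finset.disjoint_right]
        intro j hj
        simp only [Finset.mem_singleton] at hj
        subst hj
        intro hmem
        obtain ⟨q, -, hq⟩ := Finset.mem_image.mp hmem
        exact q.prop hq
      rw [himg, Finset.sum_union hdisj, Finset.sum_image
        (fun q _ q' _ h => Subtype.ext h), Finset.sum_singleton]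
    have hNdd : ∀ p, 0 ≤ srp N p := by
      intro p
      have h1 := hdd (p:ι)
      simp only [srp, hNapp] at h1 ⊢
      have h2 := hsum_split p
      have h3 : (0:ℝ) ≤ |M (p:ι) w| := abs_nonneg _
      linarith
    have hNnc : NC N := by
      intro T hTne hTcl hTz
      have hres : ∀ p ∈ T, M (p:ι) w = 0 ∧ srp M (p:ι) = 0 := by
        intro p hpT
        have h1 := hTz p hpT
        simp only [srp, hNapp] at h1
        have h2 := hsum_split p
        have h3 := hdd (p:ι)
        simp only [srp] at h3
        constructor
        · have : |M (p:ι) w| = 0 := by linarith [abs_nonneg (M (p:ι) w)]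
          exact abs_eq_zero.mp this
        · simp only [srp]; linarith [abs_nonneg (M (p:ι) w)]
      apply hnc (T.image (Subtype.val : {j // j ≠ w} → ι)) (hTne.image _)
      · intro i hiT' j hjT'
        obtain ⟨p, hpT, hpi⟩ := Finset.mem_image.mp hiT'
        subst hpi
        by_cases hjw : j = w
        · subst hjw; exact (hres p hpT).1
        · have hq : (⟨j, hjw⟩ : {j // j ≠ w}) ∉ T :=
            fun hq => hjT' (Finset.mem_image.mpr ⟨_, hq, rfl⟩)
          exact hTcl p hpT ⟨j, hjw⟩ hq
      · intro i hiT'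
        obtain ⟨p, hpT, hpi⟩ := Finset.mem_image.mp hiT'
        subst hpi
        exact (hres p hpT).2
    have hNunit : IsUnit N := isUnit_of_nc N hNdd hNnc
    set X : Matrix {j // j ≠ w} {j // j ≠ w} ℝ :=
      Matrix.of (fun p q => M⁻¹ (p:ι) (q:ι) - M⁻¹ (p:ι) w * M⁻¹ w (q:ι) / M⁻¹ w w) with hX
    have hNX : N * X = 1 := by
      ext p q
      rw [Matrix.mul_apply]
      have hsubty : ∑ c : {j // j ≠ w}, N p c * X c q
          = ∑ j ∈ Finset.univ.filter (fun j => j ≠ w),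
              M (p:ι) j * (M⁻¹ j (q:ι) - M⁻¹ j w * M⁻¹ w (q:ι) / M⁻¹ w w) := by
        rw [Finset.sum_subtype (p := fun j => j ≠ w)
          (Finset.univ.filter (fun j => j ≠ w)) (fun j => by simp)
          (fun j => M (p:ι) j * (M⁻¹ j (q:ι) - M⁻¹ j w * M⁻¹ w (q:ι) / M⁻¹ w w))]
        rfl
      rw [hsubty, Finset.filter_ne']
      have hexp : ∑ j ∈ Finset.univ.erase w,
            M (p:ι) j * (M⁻¹ j (q:ι) - M⁻¹ j w * M⁻¹ w (q:ι) / M⁻¹ w w)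
          = (∑ j ∈ Finset.univ.erase w, M (p:ι) j * M⁻¹ j (q:ι))
            - (∑ j ∈ Finset.univ.erase w, M (p:ι) j * M⁻¹ j w)
              * (M⁻¹ w (q:ι) / M⁻¹ w w) := by
        rw [Finset.sum_mul, ← Finset.sum_sub_distrib]
        refine Finset.sum_congr rfl fun j _ => by ring
      have hfull : ∀ v : ι, ∑ j ∈ Finset.univ, M (p:ι) j * M⁻¹ j v
          = if (p:ι) = v then 1 else 0 := by
        intro v
        rw [show (∑ j ∈ Finset.univ, M (p:ι) j * M⁻¹ j v) = (M * M⁻¹) (p:ι) v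
          by rw [Matrix.mul_apply], hMinv, Matrix.one_apply]
      have h1 : ∑ j ∈ Finset.univ.erase w, M (p:ι) j * M⁻¹ j (q:ι)
          = (if (p:ι) = (q:ι) then 1 else 0) - M (p:ι) w * M⁻¹ w (q:ι) := by
        have := Finset.add_sum_erase Finset.univ
          (fun j => M (p:ι) j * M⁻¹ j (q:ι)) (Finset.mem_univ w)
        rw [hfull (q:ι)] at this
        linarith
      have h2 : ∑ j ∈ Finset.univ.erase w, M (p:ι) j * M⁻¹ j w
          = -(M (p:ι) w * M⁻¹ w w) := by
        have := Finset.add_sum_erase Finset.univ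
          (fun j => M (p:ι) j * M⁻¹ j w) (Finset.mem_univ w)
        rw [hfull w, if_neg p.prop] at this
        linarith
      rw [hexp, h1, h2, Matrix.one_apply]
      have hpq : ((p:ι) = (q:ι)) ↔ (p = q) := Subtype.val_inj
      generalize hA : M (p:ι) w = A
      generalize hB : M⁻¹ w (q:ι) = B
      generalize hC : M⁻¹ w w = C
      have hd : C ≠ 0 := by rw [← hC]; exact hww.ne'
      by_cases hEq : p = q
      · rw [if_pos hEq, if_pos (hpq.mpr hEq)]
        field_simp
        ring
      · rw [if_neg hEq, if_neg (fun h => hEq (hpq.mp h))]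
        field_simp
        ring
    have hXinv : N⁻¹ = X := Matrix.inv_eq_right_inv hNX
    have hXnn := inv_entry_nonneg N hNsym hNoff hNdd hNunit ⟨a, haw⟩ ⟨b, hbw⟩
    rw [hXinv] at hXnn
    simp only [hX, Matrix.of_apply] at hXnn
    have hdivle : M⁻¹ a w * M⁻¹ w b / M⁻¹ w w ≤ M⁻¹ a b := by linarith
    calc M⁻¹ a w * M⁻¹ w b
        = (M⁻¹ a w * M⁻¹ w b / M⁻¹ w w) * M⁻¹ w w :=
          (div_mul_cancel₀ _ hww.ne').symm
      _ ≤ M⁻¹ a b * M⁻¹ w w := mul_le_mul_of_nonneg_right hdivle hww.le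

end LDC2


set_option maxHeartbeats 1000000


/-- existence of a low-diameter cover.  Let `n > 10`, `U > 32`, and let
`L` be an `n × n` invertible SDDM matrix with integer entries in `[-U, U]`.  With
`ℓ := ⌈√(log₂ n)⌉ + 3`, `r_in := 2^{2ℓ+1}`, `r_out := 2^{ℓ-2}`, and
`α := 6ℓ² · 16^ℓ · ⌈log₂(2n)⌉`, there exists an `(r_in, r_out, α)`-cover for `L`: a finite
collection `{(Vᵢ, Wᵢ)}_{i ∈ [k]}` of pairs of subsets of `[n]` such that
(1) `Vᵢ ⊆ Wᵢ`; (2) every vertex lies in some inner ball `Vᵢ`; (3) every vertex lies in at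
most `α` outer balls `Wᵢ`; (4) any `u, v` in one `Wᵢ` satisfy `D_L(u, v) ≤ r_in`, i.e.
`(L⁻¹)ᵤᵥ ≥ (nU)^{2 - r_in}`; and (5) any `u ∈ Vᵢ` and `v ∉ Wᵢ` satisfy
`D_L(u, v) > r_out`, i.e. `(L⁻¹)ᵤᵥ < (nU)^{2 - r_out}`. -/
theorem low_diameter_cover_exists {n : ℕ} (hn : 10 < n) (U : ℕ) (hU : 32 < U)
    (L : Matrix (Fin n) (Fin n) ℝ)
    (hsymm : L.IsSymm)
    (hoff : ∀ i j, i ≠ j → L i j ≤ 0)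
    (hdiag : ∀ i, 0 < L i i)
    (hdd : ∀ i, ∑ j ∈ Finset.univ.filter (fun j => j ≠ i), |L i j| ≤ L i i)
    (hint : ∀ i j, ∃ z : ℤ, L i j = (z : ℝ))
    (hbd : ∀ i j, |L i j| ≤ (U : ℝ))
    (hinv : IsUnit L)
    (ℓ : ℕ) (hℓ : ℓ = ⌈Real.sqrt (Real.logb 2 n)⌉₊ + 3)
    (rin rout : ℝ) (hrin : rin = 2 ^ (2 * ℓ + 1)) (hrout : rout = 2 ^ (ℓ - 2))
    (α : ℕ) (hα : α = 6 * ℓ ^ 2 * 16 ^ ℓ * ⌈Real.logb 2 (2 * (n : ℝ))⌉₊) :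
    ∃ (k : ℕ) (V W : Fin k → Finset (Fin n)),
      (∀ i, V i ⊆ W i) ∧
      (∀ u : Fin n, ∃ i, u ∈ V i) ∧
      (∀ u : Fin n, (Finset.univ.filter (fun i => u ∈ W i)).card ≤ α) ∧
      (∀ i, ∀ u ∈ W i, ∀ v ∈ W i,
        ((n : ℝ) * U) ^ ((2 : ℝ) - rin) ≤ L⁻¹ u v) ∧
      (∀ i, ∀ u ∈ V i, ∀ v : Fin n, v ∉ W i →
        L⁻¹ u v < ((n : ℝ) * U) ^ ((2 : ℝ) - rout)) := by
  classical
  obtain ⟨a, ha⟩ : ∃ a : ℕ, a = ⌈Real.sqrt (Real.logb 2 n)⌉₊ := ⟨_, rfl⟩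
  have hℓa : ℓ = a + 3 := by rw [hℓ, ha]
  have hnR : (10:ℝ) < n := by exact_mod_cast hn
  have hUR : (32:ℝ) < U := by exact_mod_cast hU
  obtain ⟨β, hβdef⟩ : ∃ b : ℝ, b = (n:ℝ) * U := ⟨_, rfl⟩
  rw [← hβdef]
  have hβ : 1 < β := by rw [hβdef]; nlinarith
  have hβ0 : (0:ℝ) < β := lt_trans one_pos hβ
  have hβval : β = (n:ℝ) * U := hβdef
  -- a ≥ 2
  have hlog1 : (1:ℝ) < Real.logb 2 n := by
    rw [Real.lt_logb_iff_rpow_lt (by norm_num) (by linarith)]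
    rw [Real.rpow_one]; linarith
  have hsqrt1 : (1:ℝ) < Real.sqrt (Real.logb 2 n) := by
    rw [show (1:ℝ) = Real.sqrt 1 by simp]
    exact Real.sqrt_lt_sqrt (by norm_num) hlog1
  have ha2 : 2 ≤ a := by
    rw [ha]
    have h1 : 1 < ⌈Real.sqrt (Real.logb 2 n)⌉₊ := Nat.lt_ceil.mpr (by push_cast; exact hsqrt1)
    omega
  have hl1 : 1 ≤ ℓ := by omega
  -- n ≤ 2^(a^2)
  have hlognn : 0 ≤ Real.logb 2 n := Real.logb_nonneg (by norm_num) (by linarith)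
  have hsq : Real.logb 2 n ≤ (a:ℝ)^2 := by
    have h1 : Real.sqrt (Real.logb 2 n) ≤ (a:ℝ) := by
      rw [ha]; exact Nat.le_ceil _
    calc Real.logb 2 n = Real.sqrt (Real.logb 2 n) ^ 2 := (Real.sq_sqrt hlognn).symm
      _ ≤ (a:ℝ)^2 := by nlinarith [Real.sqrt_nonneg (Real.logb 2 n)]
  have hnle : (n:ℝ) ≤ (2:ℝ) ^ (a^2 : ℕ) := by
    have h1 : (n:ℝ) = (2:ℝ) ^ Real.logb 2 (n:ℝ) :=
      (Real.rpow_logb (by norm_num) (by norm_num) (by linarith)).symm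
    rw [h1]
    calc (2:ℝ) ^ Real.logb 2 (n:ℝ) ≤ (2:ℝ) ^ ((a:ℝ)^2) :=
          (Real.rpow_le_rpow_left_iff (by norm_num)).mpr hsq
      _ = (2:ℝ) ^ (a^2 : ℕ) := by
          rw [← Real.rpow_natCast 2 (a^2)]
          congr 1
          push_cast
          ring
  have hnn : n ≤ 2^(a^2) := by exact_mod_cast hnle
  -- matrix facts
  have hsym' : Lᵀ = L := hsymm
  have hdd' : ∀ i, 0 ≤ LDC.srp L i := by
    intro i
    have h := hdd i
    rw [Finset.filter_ne'] at h
    simp only [LDC.srp]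
    linarith
  have hp0 : ∀ u v, 0 ≤ L⁻¹ u v := LDC2.inv_entry_nonneg L hsym' hoff hdd' hinv
  have hpub : ∀ u v, L⁻¹ u v ≤ (n:ℝ) := by
    intro u v
    have h := LDC2.inv_le_card L hsym' hoff hdd' hint hinv u v
    rwa [Fintype.card_fin] at h
  have hprod := LDC2.path_prod L hsym' hoff hdd' hdiag hinv
  have hpsym : ∀ u v, L⁻¹ u v = L⁻¹ v u := by
    intro u v
    have h1 : (L⁻¹)ᵀ = L⁻¹ := by rw [Matrix.transpose_nonsing_inv, hsym']
    conv_lhs => rw [← h1, Matrix.transpose_apply]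
  have hplb : ∀ u, β⁻¹ ≤ L⁻¹ u u := by
    intro u
    have h1 := LDC2.one_le_diag_mul_inv L hoff hinv hp0 u
    have h2 : L u u ≤ β := by
      have h3 : L u u ≤ U := le_trans (le_abs_self _) (hbd u u)
      rw [hβval]; nlinarith
    rw [inv_eq_one_div, div_le_iff₀ hβ0]
    nlinarith [hp0 u u, hdiag u]
  have hub2 : ∀ w, L⁻¹ w w ≤ β ^ (2:ℝ) := by
    intro w
    have h1 : β ^ (2:ℝ) = β * β := by
      rw [show (2:ℝ) = (1:ℝ)+1 by norm_num, Real.rpow_add hβ0, Real.rpow_one]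
    have hnβ : (n:ℝ) ≤ β := by rw [hβval]; nlinarith
    rw [h1]
    nlinarith [hpub w w]
  -- the balls
  obtain ⟨B, hmemB⟩ : ∃ B : Fin n → ℝ → Finset (Fin n),
      ∀ (u v : Fin n) (r : ℝ), v ∈ B u r ↔ β ^ ((2:ℝ) - r) ≤ L⁻¹ u v :=
    ⟨fun u r => Finset.univ.filter (fun v => β ^ ((2:ℝ) - r) ≤ L⁻¹ u v),
      fun u v r => by simp⟩
  have hmono : ∀ (u : Fin n) (r r' : ℝ), r ≤ r' → B u r ⊆ B u r' := by
    intro u r r' h x hx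
    rw [hmemB] at hx ⊢
    exact le_trans ((Real.rpow_le_rpow_left_iff hβ).mpr (by linarith)) hx
  have hself : ∀ (u : Fin n) (r : ℝ), 3 ≤ r → u ∈ B u r := by
    intro u r hr
    rw [hmemB]
    refine le_trans ?_ (hplb u)
    rw [show β⁻¹ = β ^ (-1:ℝ) by rw [Real.rpow_neg_one]]
    exact (Real.rpow_le_rpow_left_iff hβ).mpr (by linarith)
  have hsymB : ∀ {u v : Fin n} {r : ℝ}, v ∈ B u r → u ∈ B v r := by
    intro u v r h
    rw [hmemB] at h ⊢
    rw [hpsym v u]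
    exact h
  have htri : ∀ {u v z : Fin n} {r s : ℝ}, v ∈ B u r → z ∈ B v s → z ∈ B u (r + s) := by
    intro u v z r s h1 h2
    rw [hmemB] at h1 h2 ⊢
    have key : β ^ ((2:ℝ) - r) * β ^ ((2:ℝ) - s) ≤ L⁻¹ u z * β ^ (2:ℝ) := by
      calc β ^ ((2:ℝ) - r) * β ^ ((2:ℝ) - s)
          ≤ L⁻¹ u v * L⁻¹ v z :=
            mul_le_mul h1 h2 (le_of_lt (Real.rpow_pos_of_pos hβ0 _)) (hp0 u v)
        _ ≤ L⁻¹ u z * L⁻¹ v v := hprod u v z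
        _ ≤ L⁻¹ u z * β ^ (2:ℝ) := mul_le_mul_of_nonneg_left (hub2 v) (hp0 u z)
    have hpow : β ^ ((2:ℝ) - (r+s)) * β ^ (2:ℝ) = β ^ ((2:ℝ) - r) * β ^ ((2:ℝ) - s) := by
      rw [← Real.rpow_add hβ0, ← Real.rpow_add hβ0]
      congr 1
      ring
    have h3 : β ^ ((2:ℝ) - (r+s)) * β ^ (2:ℝ) ≤ L⁻¹ u z * β ^ (2:ℝ) := by
      rw [hpow]; exact key
    exact le_of_mul_le_mul_right h3 (Real.rpow_pos_of_pos hβ0 _)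
  have hcardn : ∀ (u : Fin n) (r : ℝ), (B u r).card ≤ n := by
    intro u r
    have h := Finset.card_le_univ (B u r)
    simpa using h
  -- radii
  obtain ⟨R, hRdef⟩ : ∃ r : ℝ, r = (2:ℝ)^(a+1) + 3 := ⟨_, rfl⟩
  have hx4 : (4:ℝ) ≤ (2:ℝ)^a := by
    calc (4:ℝ) = 2^2 := by norm_num
      _ ≤ 2^a := pow_le_pow_right₀ (by norm_num) ha2
  have hReq : R = 2*(2:ℝ)^a + 3 := by rw [hRdef, pow_succ]; ring
  have hR0 : (0:ℝ) < R := by nlinarith [hReq, hx4]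
  have hR11 : (11:ℝ) ≤ R := by nlinarith [hReq, hx4]
  have hrout' : rout = (2:ℝ)^(a+1) := by
    rw [hrout]
    congr 1
    omega
  have hroutR : rout + 3 = R := by rw [hrout', hRdef]
  have hrad : ∀ j : ℕ, (3:ℝ) ≤ (2:ℝ)^j * R := by
    intro j
    have h1 : (1:ℝ) ≤ (2:ℝ)^j := by
      calc (1:ℝ) = 2^0 := by norm_num
        _ ≤ 2^j := pow_le_pow_right₀ (by norm_num) (Nat.zero_le j)
    nlinarith
  -- stopping scale
  have hstop : ∀ u : Fin n, ∃ j : ℕ, (1 ≤ j ∧ j ≤ a + 1) ∧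
      (B u ((2:ℝ)^(j+3) * R)).card ≤ 2^(3*ℓ) * (B u ((2:ℝ)^j * R)).card := by
    intro u
    by_contra hcon
    push_neg at hcon
    have hchain : ∀ i : ℕ, i ≤ ℓ/3 → (2^(3*ℓ))^i ≤ (B u ((2:ℝ)^(1+3*i) * R)).card := by
      intro i
      induction i with
      | zero =>
        intro _
        rw [pow_zero]
        exact Finset.card_pos.mpr ⟨u, hself u _ (hrad 1)⟩
      | succ i ih =>
        intro hi
        have hdivm := Nat.div_mul_le_self ℓ 3
        have hdam := Nat.div_add_mod ℓ 3
        have hmod : ℓ % 3 < 3 := Nat.mod_lt ℓ (by norm_num)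
        have hj1 : 1 ≤ 1 + 3*i := by omega
        have hj2 : 1 + 3*i ≤ a + 1 := by omega
        have hlt := hcon (1+3*i) ⟨hj1, hj2⟩
        have ihh := ih (by omega)
        rw [show 1+3*(i+1) = (1+3*i)+3 from by ring]
        calc (2^(3*ℓ))^(i+1) = 2^(3*ℓ) * (2^(3*ℓ))^i := by ring
          _ ≤ 2^(3*ℓ) * (B u ((2:ℝ)^(1+3*i) * R)).card := Nat.mul_le_mul_left _ ihh
          _ ≤ (B u ((2:ℝ)^((1+3*i)+3) * R)).card := le_of_lt hlt
    have hfin := hchain (ℓ/3) le_rfl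
    have hcard := hcardn u ((2:ℝ)^(1+3*(ℓ/3)) * R)
    have h4n : 4 * n ≤ (2^(3*ℓ))^(ℓ/3) := by
      have hdam := Nat.div_add_mod ℓ 3
      have hmod : ℓ % 3 < 3 := Nat.mod_lt ℓ (by norm_num)
      have h3 : a + 1 ≤ 3*(ℓ/3) := by omega
      have h2 : a^2 + 2 ≤ 3*ℓ*(ℓ/3) := by
        calc a^2 + 2 ≤ (a+3)*(a+1) := by nlinarith
          _ = ℓ * (a+1) := by rw [hℓa]
          _ ≤ ℓ * (3*(ℓ/3)) := Nat.mul_le_mul_left _ h3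
          _ = 3*ℓ*(ℓ/3) := by ring
      calc 4*n ≤ 4*2^(a^2) := by omega
        _ = 2^(a^2+2) := by rw [pow_add]; ring
        _ ≤ 2^(3*ℓ*(ℓ/3)) := Nat.pow_le_pow_right (by norm_num) h2
        _ = (2^(3*ℓ))^(ℓ/3) := pow_mul 2 _ _
    omega
  choose jdx hjdx using hstop
  obtain ⟨blog, hblogdef⟩ : ∃ f : Fin n → ℕ,
      ∀ u, f u = Nat.log 2 (B u ((2:ℝ)^(jdx u) * R)).card :=
    ⟨_, fun u => rfl⟩
  -- maximal separated subsets
  have hmaxsel : ∀ j b : ℕ, ∃ M : Finset (Fin n),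
      (M ⊆ Finset.univ.filter (fun u => jdx u = j ∧ blog u = b) ∧
        (∀ u ∈ M, ∀ w ∈ M, u ≠ w → w ∉ B u ((2:ℝ)^(j+1) * R))) ∧
      ∀ s ⊆ Finset.univ.filter (fun u => jdx u = j ∧ blog u = b),
        (∀ u ∈ s, ∀ w ∈ s, u ≠ w → w ∉ B u ((2:ℝ)^(j+1) * R)) → s.card ≤ M.card := by
    intro j b
    set F := ((Finset.univ.filter (fun u => jdx u = j ∧ blog u = b)).powerset).filter
      (fun s => ∀ u ∈ s, ∀ w ∈ s, u ≠ w → w ∉ B u ((2:ℝ)^(j+1) * R)) with hF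
    have hFne : F.Nonempty := by
      refine ⟨∅, ?_⟩
      rw [hF, Finset.mem_filter, Finset.mem_powerset]
      exact ⟨Finset.empty_subset _, by intro u hu; exact absurd hu (Finset.notMem_empty _)⟩
    obtain ⟨M, hMF, hMmax⟩ := Finset.exists_max_image F Finset.card hFne
    rw [hF, Finset.mem_filter, Finset.mem_powerset] at hMF
    refine ⟨M, ⟨hMF.1, hMF.2⟩, ?_⟩
    intro s hs hsep
    exact hMmax s (by rw [hF, Finset.mem_filter, Finset.mem_powerset]; exact ⟨hs, hsep⟩)
  choose Msel hMsel using hmaxsel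
  have hMprop : ∀ j b : ℕ, ∀ y ∈ Msel j b, jdx y = j ∧ blog y = b := by
    intro j b y hy
    have h := (hMsel j b).1.1 hy
    rw [Finset.mem_filter] at h
    exact h.2
  -- the cover
  refine ⟨n, (fun u => if u ∈ Msel (jdx u) (blog u)
      then B u ((2:ℝ)^(jdx u + 1) * R) else ∅),
    (fun u => if u ∈ Msel (jdx u) (blog u)
      then B u ((2:ℝ)^(jdx u + 1) * R + R) else ∅), ?_, ?_, ?_, ?_, ?_⟩
  · -- V ⊆ W
    intro i
    dsimp only
    split_ifs with h
    · exact hmono _ _ _ (by linarith)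
    · exact Finset.Subset.refl _
  · -- coverage
    intro u'
    dsimp only
    by_cases hu' : u' ∈ Msel (jdx u') (blog u')
    · exact ⟨u', by rw [if_pos hu']; exact hself _ _ (le_trans (by norm_num) (hrad (jdx u' + 1)))⟩
    · have hCmem : u' ∈ Finset.univ.filter (fun u => jdx u = jdx u' ∧ blog u = blog u') := by
        rw [Finset.mem_filter]
        exact ⟨Finset.mem_univ _, rfl, rfl⟩
      have h1 : ¬ (∀ x ∈ insert u' (Msel (jdx u') (blog u')),
          ∀ y ∈ insert u' (Msel (jdx u') (blog u')), x ≠ y →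
            y ∉ B x ((2:ℝ)^(jdx u' + 1) * R)) := by
        intro hsep
        have hsub : insert u' (Msel (jdx u') (blog u'))
            ⊆ Finset.univ.filter (fun u => jdx u = jdx u' ∧ blog u = blog u') := by
          intro x hx
          rcases Finset.mem_insert.mp hx with rfl | hx
          · exact hCmem
          · exact (hMsel (jdx u') (blog u')).1.1 hx
        have hle := (hMsel (jdx u') (blog u')).2 _ hsub hsep
        rw [Finset.card_insert_of_notMem hu'] at hle
        omega
      push_neg at h1
      obtain ⟨x, hx, y, hy, hxy, hyB⟩ := h1
      rcases Finset.mem_insert.mp hx with rfl | hxM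
      · rcases Finset.mem_insert.mp hy with rfl | hyM
        · exact absurd rfl hxy
        · refine ⟨y, ?_⟩
          obtain ⟨hjy, hby⟩ := hMprop _ _ y hyM
          rw [hjy, hby, if_pos hyM]
          exact hsymB hyB
      · rcases Finset.mem_insert.mp hy with rfl | hyM
        · refine ⟨x, ?_⟩
          obtain ⟨hjx, hbx⟩ := hMprop _ _ x hxM
          rw [hjx, hbx, if_pos hxM]
          exact hyB
        · exact absurd hyB ((hMsel (jdx u') (blog u')).1.2 x hxM y hyM hxy)
  · -- overlap
    intro v
    dsimp only
    have hmap : ∀ u ∈ Finset.univ.filter (fun u => v ∈ (if u ∈ Msel (jdx u) (blog u)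
        then B u ((2:ℝ)^(jdx u + 1) * R + R) else ∅)),
        (jdx u, blog u) ∈ Finset.range (a+2) ×ˢ Finset.range (Nat.log 2 n + 1) := by
      intro u _
      refine Finset.mem_product.mpr ⟨Finset.mem_range.mpr ?_, Finset.mem_range.mpr ?_⟩
      · have := (hjdx u).1.2
        omega
      · have h1 := hcardn u ((2:ℝ)^(jdx u) * R)
        have h2 := Nat.log_mono_right (b := 2) h1
        rw [hblogdef]
        omega
    rw [Finset.card_eq_sum_card_fiberwise hmap]
    have hfiber : ∀ jb ∈ Finset.range (a+2) ×ˢ Finset.range (Nat.log 2 n + 1),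
        ((Finset.univ.filter (fun u => v ∈ (if u ∈ Msel (jdx u) (blog u)
          then B u ((2:ℝ)^(jdx u + 1) * R + R) else ∅))).filter
            (fun u => (jdx u, blog u) = jb)).card ≤ 2^(3*ℓ+1) := by
      rintro ⟨j, b⟩ -
      set Sf := ((Finset.univ.filter (fun u => v ∈ (if u ∈ Msel (jdx u) (blog u)
          then B u ((2:ℝ)^(jdx u + 1) * R + R) else ∅))).filter
            (fun u => (jdx u, blog u) = (j, b))) with hSfdef
      rcases Finset.eq_empty_or_nonempty Sf with hSe | ⟨u₀, hu₀⟩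
      · rw [hSe]; simp
      · have hSmem : ∀ u ∈ Sf, u ∈ Msel j b ∧ jdx u = j ∧ blog u = b ∧
            v ∈ B u ((2:ℝ)^(j + 1) * R + R) := by
          intro u hu
          rw [hSfdef, Finset.mem_filter, Finset.mem_filter] at hu
          obtain ⟨⟨-, hvW⟩, hjb'⟩ := hu
          rw [Prod.mk.injEq] at hjb'
          obtain ⟨hj, hb⟩ := hjb'
          by_cases hc : u ∈ Msel (jdx u) (blog u)
          · rw [if_pos hc] at hvW
            rw [hj, hb] at hc
            rw [hj] at hvW
            exact ⟨hc, hj, hb, hvW⟩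
          · rw [if_neg hc] at hvW
            exact absurd hvW (Finset.notMem_empty _)
        have hdisj : ∀ x ∈ Sf, ∀ y ∈ Sf, x ≠ y →
            Disjoint (B x ((2:ℝ)^j * R)) (B y ((2:ℝ)^j * R)) := by
          intro x hx y hy hxy
          rw [Finset.disjoint_left]
          intro z hzx hzy
          have h1 : y ∈ B z ((2:ℝ)^j * R) := hsymB hzy
          have h2 : y ∈ B x ((2:ℝ)^j * R + (2:ℝ)^j * R) := htri hzx h1
          have h3 : y ∈ B x ((2:ℝ)^(j+1) * R) := by
            have he : (2:ℝ)^j * R + (2:ℝ)^j * R = (2:ℝ)^(j+1) * R := by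
              rw [pow_succ]; ring
            rwa [he] at h2
          exact (hMsel j b).1.2 x (hSmem x hx).1 y (hSmem y hy).1 hxy h3
        have hcont : ∀ u ∈ Sf, B u ((2:ℝ)^j * R) ⊆ B u₀ ((2:ℝ)^(j+3) * R) := by
          intro u hu z hz
          have hv₀ : v ∈ B u₀ ((2:ℝ)^(j + 1) * R + R) := (hSmem u₀ hu₀).2.2.2
          have hvu : v ∈ B u ((2:ℝ)^(j + 1) * R + R) := (hSmem u hu).2.2.2
          have h1 : u ∈ B v ((2:ℝ)^(j + 1) * R + R) := hsymB hvu
          have h2 := htri hv₀ h1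
          have h3 := htri h2 hz
          refine hmono _ _ _ ?_ h3
          have hp1 : (1:ℝ) ≤ (2:ℝ)^j := by
            calc (1:ℝ) = 2^0 := by norm_num
              _ ≤ 2^j := pow_le_pow_right₀ (by norm_num) (Nat.zero_le j)
          have e1 : (2:ℝ)^(j+1) = 2*(2:ℝ)^j := by rw [pow_succ]; ring
          have e3 : (2:ℝ)^(j+3) = 8*(2:ℝ)^j := by rw [pow_add]; norm_num [mul_comm]
          nlinarith [hR0, hp1]
        have hsum : ∑ u ∈ Sf, (B u ((2:ℝ)^j * R)).card ≤ (B u₀ ((2:ℝ)^(j+3) * R)).card := by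
          rw [← Finset.card_biUnion hdisj]
          apply Finset.card_le_card
          intro z hz
          obtain ⟨u, hu, hzu⟩ := Finset.mem_biUnion.mp hz
          exact hcont u hu hzu
        have hlow : ∀ u ∈ Sf, 2^b ≤ (B u ((2:ℝ)^j * R)).card := by
          intro u hu
          obtain ⟨-, hj, hb, -⟩ := hSmem u hu
          have hne : (B u ((2:ℝ)^(jdx u) * R)).card ≠ 0 :=
            Finset.card_ne_zero_of_mem (hself _ _ (hrad _))
          have h1 : 2^(Nat.log 2 (B u ((2:ℝ)^(jdx u) * R)).card)
              ≤ (B u ((2:ℝ)^(jdx u) * R)).card := Nat.pow_log_le_self 2 hne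
          rw [← hblogdef, hb, hj] at h1
          exact h1
        have hup : (B u₀ ((2:ℝ)^(j+3) * R)).card ≤ 2^(3*ℓ) * 2^(b+1) := by
          obtain ⟨-, hj0, hb0, -⟩ := hSmem u₀ hu₀
          have h1 := (hjdx u₀).2
          rw [hj0] at h1
          have h2 : (B u₀ ((2:ℝ)^j * R)).card < 2^(b+1) := by
            have h3 := Nat.lt_pow_succ_log_self (show 1 < 2 by norm_num)
              (B u₀ ((2:ℝ)^(jdx u₀) * R)).card
            rw [← hblogdef, hb0, hj0] at h3
            exact h3
          calc (B u₀ ((2:ℝ)^(j+3) * R)).card ≤ 2^(3*ℓ) * (B u₀ ((2:ℝ)^j * R)).card := h1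
            _ ≤ 2^(3*ℓ) * 2^(b+1) := Nat.mul_le_mul_left _ (le_of_lt h2)
        have hcount : Sf.card * 2^b ≤ 2^(3*ℓ+1) * 2^b := by
          calc Sf.card * 2^b = ∑ _u ∈ Sf, 2^b := by rw [Finset.sum_const, smul_eq_mul]
            _ ≤ ∑ u ∈ Sf, (B u ((2:ℝ)^j * R)).card := Finset.sum_le_sum hlow
            _ ≤ (B u₀ ((2:ℝ)^(j+3) * R)).card := hsum
            _ ≤ 2^(3*ℓ) * 2^(b+1) := hup
            _ = 2^(3*ℓ+1) * 2^b := by ring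
        exact Nat.le_of_mul_le_mul_right hcount (Nat.pow_pos (by norm_num))
    have hlogceil : Nat.log 2 n + 1 ≤ ⌈Real.logb 2 (2*(n:ℝ))⌉₊ := by
      have h2 : (2:ℝ)^(Nat.log 2 n) ≤ n := by
        exact_mod_cast Nat.pow_log_le_self 2 (show n ≠ 0 by omega)
      have h3 : ((Nat.log 2 n : ℕ):ℝ) ≤ Real.logb 2 n := by
        rw [Real.le_logb_iff_rpow_le (by norm_num) (by linarith)]
        rw [Real.rpow_natCast]
        exact h2
      have h4 : Real.logb 2 (2*(n:ℝ)) = 1 + Real.logb 2 n := by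
        rw [Real.logb_mul (by norm_num) (by positivity), Real.logb_self_eq_one (by norm_num : (1:ℝ) < 2)]
      have h5 := Nat.le_ceil (Real.logb 2 (2*(n:ℝ)))
      have h6 : ((Nat.log 2 n + 1 : ℕ):ℝ) ≤ (⌈Real.logb 2 (2*(n:ℝ))⌉₊ : ℝ) := by
        push_cast
        push_cast at h3
        linarith
      exact_mod_cast h6
    have hfinal : (a+2) * (Nat.log 2 n + 1) * 2^(3*ℓ+1) ≤ α := by
      rw [hα]
      have h16 : (16:ℕ)^ℓ = 2^(4*ℓ) := by
        rw [show (16:ℕ) = 2^4 from rfl, ← pow_mul]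
      have hp34 : (2:ℕ)^(3*ℓ+1) ≤ 2^(4*ℓ) := Nat.pow_le_pow_right (by norm_num) (by omega)
      have hll : ℓ ≤ 6*ℓ^2 := by nlinarith
      calc (a+2) * (Nat.log 2 n + 1) * 2^(3*ℓ+1)
          ≤ ℓ * ⌈Real.logb 2 (2*(n:ℝ))⌉₊ * 2^(4*ℓ) :=
            Nat.mul_le_mul (Nat.mul_le_mul (by omega) hlogceil) hp34
        _ ≤ (6*ℓ^2) * ⌈Real.logb 2 (2*(n:ℝ))⌉₊ * 2^(4*ℓ) :=
            Nat.mul_le_mul_right _ (Nat.mul_le_mul_right _ hll)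
        _ = 6*ℓ^2 * 16^ℓ * ⌈Real.logb 2 (2*(n:ℝ))⌉₊ := by rw [h16]; ring
    calc ∑ jb ∈ Finset.range (a+2) ×ˢ Finset.range (Nat.log 2 n + 1),
          ((Finset.univ.filter (fun u => v ∈ (if u ∈ Msel (jdx u) (blog u)
            then B u ((2:ℝ)^(jdx u + 1) * R + R) else ∅))).filter
              (fun u => (jdx u, blog u) = jb)).card
        ≤ ∑ _jb ∈ Finset.range (a+2) ×ˢ Finset.range (Nat.log 2 n + 1), 2^(3*ℓ+1) :=
          Finset.sum_le_sum hfiber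
      _ = (a+2) * (Nat.log 2 n + 1) * 2^(3*ℓ+1) := by
          rw [Finset.sum_const, Finset.card_product, Finset.card_range, Finset.card_range,
            smul_eq_mul]
      _ ≤ α := hfinal
  · -- diameter
    intro i u' hu' v' hv'
    dsimp only at hu' hv'
    by_cases hc : i ∈ Msel (jdx i) (blog i)
    · rw [if_pos hc] at hu' hv'
      have h1 : i ∈ B u' ((2:ℝ)^(jdx i + 1) * R + R) := hsymB hu'
      have h2 := htri h1 hv'
      have h3 := (hmemB _ _ _).mp h2
      refine le_trans ?_ h3
      apply (Real.rpow_le_rpow_left_iff hβ).mpr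
      have hpow4 : (2:ℝ)^(jdx i + 1) ≤ 4 * (2:ℝ)^a := by
        calc (2:ℝ)^(jdx i + 1) ≤ (2:ℝ)^(a+2) := by
              apply pow_le_pow_right₀ (by norm_num)
              have := (hjdx i).1.2
              omega
          _ = 4 * (2:ℝ)^a := by rw [pow_add]; norm_num; ring
      have hrin128 : rin = 128 * ((2:ℝ)^a)^2 := by
        rw [hrin, show 2*ℓ+1 = a*2+7 from by omega, pow_add, pow_mul]
        norm_num [mul_comm]
      have hρR : (2:ℝ)^(jdx i + 1) * R ≤ 4 * (2:ℝ)^a * R :=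
        mul_le_mul_of_nonneg_right hpow4 hR0.le
      nlinarith [hx4, hρR, hR0]
    · rw [if_neg hc] at hu'
      exact absurd hu' (Finset.notMem_empty _)
  · -- separation
    intro i u' hu' v hv
    dsimp only at hu' hv
    by_cases hc : i ∈ Msel (jdx i) (blog i)
    · rw [if_pos hc] at hu' hv
      by_contra hge
      push_neg at hge
      apply hv
      have h1 : v ∈ B u' rout := (hmemB _ _ _).mpr hge
      have h2 := htri hu' h1
      exact hmono _ _ _ (by linarith) h2
    · rw [if_neg hc] at hu'
      exact absurd hu' (Finset.notMem_empty _)
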